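/- arXiv:1906.09533 — 3 statements merged into one kernel-verified Lean document; each statement's English description precedes it below -/
import Mathlib

section
/- Let P be a p×p permutation matrix, L a p×p real unit lower-triangular matrix, Q a p×p real orthogonal matrix, and Λ = diag(λ_1, …, λ_p) a real diagonal matrix, and set H̄ = Pᵀ L Q Λ Qᵀ Lᵀ P. Let τ > 0 and suppose λ_min(H̄) ≥ τ · σ_max(L)², where σ_max(L) is the largest singular value of L. Then λ_j ≥ τ for every j; consequently, the clipped diagonal matrix Λ̄ with entries max{τ, |λ_j|} equals Λ, and hence the preconditioned matrix H̄̄ = Pᵀ L Q Λ̄ Qᵀ Lᵀ P equals H̄. -/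
open Matrix

/-- The Euclidean norm on `ℝ^p` (vectors identified with `Fin p → ℝ`). -/
noncomputable def euclNorm {p : ℕ} (x : Fin p → ℝ) : ℝ := Real.sqrt (∑ i, x i ^ 2)

/-- The smallest eigenvalue of a symmetric real matrix, characterized as the infimum
of the Rayleigh quotient `xᵀ A x / (xᵀ x)` over nonzero `x`. -/
noncomputable def lambdaMin {p : ℕ} (A : Matrix (Fin p) (Fin p) ℝ) : ℝ :=
  ⨅ x : {x : Fin p → ℝ // x ≠ 0}, x.1 ⬝ᵥ A.mulVec x.1 / euclNorm x.1 ^ 2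

/-- The largest singular value of a real matrix `L`, characterized as the supremum of
`‖L x‖ / ‖x‖` over nonzero `x`. -/
noncomputable def sigmaMax {p : ℕ} (L : Matrix (Fin p) (Fin p) ℝ) : ℝ :=
  ⨆ x : {x : Fin p → ℝ // x ≠ 0}, euclNorm (L.mulVec x.1) / euclNorm x.1

namespace Stmt10Aux

variable {p : ℕ}

lemma n2_nonneg (x : Fin p → ℝ) : 0 ≤ ∑ i, x i ^ 2 :=
  Finset.sum_nonneg fun _ _ => sq_nonneg _

lemma euclNorm_nonneg (x : Fin p → ℝ) : 0 ≤ euclNorm x := Real.sqrt_nonneg _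

lemma euclNorm_sq (x : Fin p → ℝ) : euclNorm x ^ 2 = ∑ i, x i ^ 2 :=
  Real.sq_sqrt (n2_nonneg x)

lemma dot_self (x : Fin p → ℝ) : x ⬝ᵥ x = ∑ i, x i ^ 2 := by
  simp [dotProduct, sq]

lemma n2_pos {x : Fin p → ℝ} (hx : x ≠ 0) : 0 < ∑ i, x i ^ 2 := by
  rcases (n2_nonneg x).lt_or_eq with h | h
  · exact h
  · exfalso; apply hx
    funext i
    have := (Finset.sum_eq_zero_iff_of_nonneg (fun i _ => sq_nonneg (x i))).1 h.symm i
      (Finset.mem_univ i)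
    exact pow_eq_zero_iff (by norm_num) |>.1 this

lemma euclNorm_pos {x : Fin p → ℝ} (hx : x ≠ 0) : 0 < euclNorm x :=
  Real.sqrt_pos.2 (n2_pos hx)

/-- Cauchy–Schwarz. -/
lemma dot_le (x y : Fin p → ℝ) : x ⬝ᵥ y ≤ euclNorm x * euclNorm y := by
  simpa [dotProduct, euclNorm] using Real.sum_mul_le_sqrt_mul_sqrt Finset.univ x y

/-- Frobenius bound. -/
lemma mulVec_n2_le (A : Matrix (Fin p) (Fin p) ℝ) (x : Fin p → ℝ) :
    ∑ i, A.mulVec x i ^ 2 ≤ (∑ i, ∑ j, A i j ^ 2) * ∑ i, x i ^ 2 := by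
  rw [Finset.sum_mul]
  refine Finset.sum_le_sum fun i _ => ?_
  simpa [mulVec, dotProduct] using
    Finset.sum_mul_sq_le_sq_mul_sq Finset.univ (A i) x

lemma euclNorm_mulVec_le (A : Matrix (Fin p) (Fin p) ℝ) (x : Fin p → ℝ) :
    euclNorm (A.mulVec x) ≤ Real.sqrt (∑ i, ∑ j, A i j ^ 2) * euclNorm x := by
  rw [euclNorm, euclNorm, ← Real.sqrt_mul (x := ∑ i, ∑ j, A i j ^ 2) (Finset.sum_nonneg fun _ _ => n2_nonneg _)]
  exact Real.sqrt_le_sqrt (mulVec_n2_le A x)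

lemma sigmaMax_spec (L : Matrix (Fin p) (Fin p) ℝ) (x : Fin p → ℝ) :
    euclNorm (L.mulVec x) ≤ sigmaMax L * euclNorm x := by
  by_cases hx : x = 0
  · simp [hx, euclNorm, Matrix.mulVec_zero]
  · have hb : BddAbove (Set.range fun x : {x : Fin p → ℝ // x ≠ 0} =>
        euclNorm (L.mulVec x.1) / euclNorm x.1) := by
      refine ⟨Real.sqrt (∑ i, ∑ j, L i j ^ 2), ?_⟩
      rintro _ ⟨y, rfl⟩
      rw [div_le_iff₀ (euclNorm_pos y.2)]
      exact euclNorm_mulVec_le L y.1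
    have := le_ciSup hb (⟨x, hx⟩ : {x : Fin p → ℝ // x ≠ 0})
    rw [div_le_iff₀ (euclNorm_pos hx)] at this
    exact this

lemma lambdaMin_le (A : Matrix (Fin p) (Fin p) ℝ) {x : Fin p → ℝ} (hx : x ≠ 0) :
    lambdaMin A ≤ x ⬝ᵥ A.mulVec x / euclNorm x ^ 2 := by
  have hb : BddBelow (Set.range fun x : {x : Fin p → ℝ // x ≠ 0} =>
      x.1 ⬝ᵥ A.mulVec x.1 / euclNorm x.1 ^ 2) := by
    refine ⟨-Real.sqrt (∑ i, ∑ j, A i j ^ 2), ?_⟩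
    rintro _ ⟨y, rfl⟩
    have h1 : -(y.1 ⬝ᵥ A.mulVec y.1) ≤ euclNorm y.1 * (Real.sqrt (∑ i, ∑ j, A i j ^ 2) * euclNorm y.1) := by
      calc -(y.1 ⬝ᵥ A.mulVec y.1) = (-y.1) ⬝ᵥ A.mulVec y.1 := by simp
        _ ≤ euclNorm (-y.1) * euclNorm (A.mulVec y.1) := dot_le _ _
        _ = euclNorm y.1 * euclNorm (A.mulVec y.1) := by simp [euclNorm]
        _ ≤ euclNorm y.1 * (Real.sqrt (∑ i, ∑ j, A i j ^ 2) * euclNorm y.1) := by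
            exact mul_le_mul_of_nonneg_left (euclNorm_mulVec_le A y.1) (euclNorm_nonneg _)
    rw [le_div_iff₀ (by rw [euclNorm_sq]; exact n2_pos y.2)]
    nlinarith [sq_nonneg (euclNorm y.1)]
  exact ciInf_le hb (⟨x, hx⟩ : {x : Fin p → ℝ // x ≠ 0})

end Stmt10Aux

open Stmt10Aux

/-- Deterministic core of Theorem 3 of the paper: if `H̄ = Pᵀ L Q Λ Qᵀ Lᵀ P` with `P` a
permutation matrix, `L` unit lower-triangular, `Q` orthogonal, `Λ = diag(λ_j)`, and
`λ_min(H̄) ≥ τ σ_max(L)²` with `τ > 0`, then `λ_j ≥ τ` for every `j`; consequently the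
clipped matrix `Λ̄ = diag(max{τ, |λ_j|})` equals `Λ` and the preconditioned matrix
`H̄̄ = Pᵀ L Q Λ̄ Qᵀ Lᵀ P` equals `H̄`. -/
theorem stmt10 {p : ℕ} (P L Q : Matrix (Fin p) (Fin p) ℝ) (d : Fin p → ℝ)
    (τ : ℝ) (hτ : 0 < τ)
    (hP : ∃ e : Equiv.Perm (Fin p), P = e.permMatrix ℝ)
    (hLdiag : ∀ i, L i i = 1) (hLtri : ∀ i j : Fin p, i < j → L i j = 0)
    (hQ : Q * Qᵀ = 1) (hQ' : Qᵀ * Q = 1)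
    (hmin : τ * sigmaMax L ^ 2 ≤ lambdaMin (Pᵀ * L * Q * Matrix.diagonal d * Qᵀ * Lᵀ * P)) :
    (∀ j, τ ≤ d j) ∧
    (Matrix.diagonal fun j => max τ |d j|) = Matrix.diagonal d ∧
    Pᵀ * L * Q * (Matrix.diagonal fun j => max τ |d j|) * Qᵀ * Lᵀ * P =
      Pᵀ * L * Q * Matrix.diagonal d * Qᵀ * Lᵀ * P := by
  obtain ⟨e, rfl⟩ := hP
  -- L is invertible
  have hdet : L.det = 1 := by
    rw [Matrix.det_of_lowerTriangular L (fun i j h => hLtri _ _ h)]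
    simp [hLdiag]
  have hdetT : (Lᵀ).det = 1 := by rw [Matrix.det_transpose, hdet]
  have hLinv : Lᵀ * (Lᵀ)⁻¹ = 1 :=
    Matrix.mul_nonsing_inv _ (by rw [hdetT]; exact isUnit_one)
  have key : ∀ j, τ ≤ d j := by
    intro j
    set u : Fin p → ℝ := Q.mulVec (Pi.single j 1) with hu
    set v : Fin p → ℝ := (Lᵀ)⁻¹.mulVec u with hv
    have hLv : Lᵀ.mulVec v = u := by
      rw [hv, Matrix.mulVec_mulVec, hLinv, Matrix.one_mulVec]
    -- norms of u and single
    have hsingle : ∑ i, (Pi.single j 1 : Fin p → ℝ) i ^ 2 = 1 := by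
      rw [Finset.sum_eq_single j]
      · simp
      · intro i _ hij; simp [Pi.single_apply, hij]
      · simp
    have hQnorm : ∀ y : Fin p → ℝ, ∑ i, Q.mulVec y i ^ 2 = ∑ i, y i ^ 2 := by
      intro y
      rw [← dot_self, ← dot_self]
      have step : y ⬝ᵥ (Qᵀ * Q).mulVec y = Q.mulVec y ⬝ᵥ Q.mulVec y := by
        rw [← Matrix.mulVec_mulVec, Matrix.dotProduct_mulVec y Qᵀ, Matrix.vecMul_transpose]
      rw [← step, hQ', Matrix.one_mulVec]
    have hun2 : ∑ i, u i ^ 2 = 1 := by rw [hu, hQnorm, hsingle]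
    have hune : euclNorm u = 1 := by rw [euclNorm, hun2, Real.sqrt_one]
    have hvne : v ≠ 0 := by
      intro h
      rw [h, Matrix.mulVec_zero] at hLv
      have : (1 : ℝ) = 0 := by rw [← hun2, ← hLv]; simp
      norm_num at this
    -- x := v ∘ e⁻¹ satisfies P.mulVec x = v
    set x : Fin p → ℝ := fun i => v (e⁻¹ i) with hx
    have hxne : x ≠ 0 := by
      intro h
      apply hvne
      funext i
      have := congrFun h (e i)
      simpa [hx] using this
    have hPx : (e.permMatrix ℝ).mulVec x = v := by
      funext i
      simp only [Matrix.mulVec, dotProduct, Equiv.Perm.permMatrix, PEquiv.toMatrix,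
        Equiv.toPEquiv_apply, Option.mem_def, Option.some.injEq]
      rw [Finset.sum_eq_single (e i)]
      · simp [hx]
      · intro b _ hb; simp [Ne.symm hb]
      · simp
    have hxn2 : ∑ i, x i ^ 2 = ∑ i, v i ^ 2 := by
      rw [hx]
      exact Equiv.sum_comp (e⁻¹ : Equiv.Perm (Fin p)) (fun i => v i ^ 2)
    -- Rayleigh quotient at x equals d j / N2 v
    set A := (e.permMatrix ℝ)ᵀ * L * Q * Matrix.diagonal d * Qᵀ * Lᵀ * (e.permMatrix ℝ) with hA
    have hz : Qᵀ.mulVec (Lᵀ.mulVec v) = Pi.single j 1 := by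
      rw [hLv, hu, Matrix.mulVec_mulVec, hQ', Matrix.one_mulVec]
    have hray : x ⬝ᵥ A.mulVec x = d j := by
      have hAx : A.mulVec x = ((Equiv.Perm.permMatrix ℝ e)ᵀ).mulVec
          (L.mulVec (Q.mulVec ((Matrix.diagonal d).mulVec (Pi.single j 1)))) := by
        simp only [hA, ← Matrix.mulVec_mulVec, hPx, hz]
      rw [hAx, Matrix.dotProduct_mulVec x, Matrix.vecMul_transpose, hPx]
      rw [Matrix.dotProduct_mulVec v L, ← Matrix.mulVec_transpose]
      rw [Matrix.dotProduct_mulVec _ Q, ← Matrix.mulVec_transpose, hz]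
      simp [dotProduct, Matrix.mulVec_diagonal, Pi.single_apply]
    -- σ bound : 1 ≤ sigmaMax L * euclNorm v
    have hσ0 : 0 ≤ sigmaMax L := by
      have := sigmaMax_spec L u
      have h1 : euclNorm (L.mulVec u) ≥ 0 := euclNorm_nonneg _
      nlinarith [euclNorm_nonneg (L.mulVec u)]
    have hcs : (1:ℝ) ≤ sigmaMax L * euclNorm v := by
      have h1 : ∑ i, (Lᵀ.mulVec v) i ^ 2 = 1 := by rw [hLv, hun2]
      have h2 : Lᵀ.mulVec v ⬝ᵥ Lᵀ.mulVec v = v ⬝ᵥ L.mulVec (Lᵀ.mulVec v) := by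
        rw [Matrix.dotProduct_mulVec, Matrix.vecMul_transpose]
        exact dotProduct_comm _ _
      have h3 : v ⬝ᵥ L.mulVec (Lᵀ.mulVec v) ≤ euclNorm v * (sigmaMax L * euclNorm (Lᵀ.mulVec v)) :=
        (dot_le _ _).trans (mul_le_mul_of_nonneg_left (sigmaMax_spec L _) (euclNorm_nonneg _))
      have h4 : euclNorm (Lᵀ.mulVec v) = 1 := by rw [euclNorm, h1, Real.sqrt_one]
      rw [h4, mul_one] at h3
      have h5 : Lᵀ.mulVec v ⬝ᵥ Lᵀ.mulVec v = 1 := by rw [dot_self, h1]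
      calc (1:ℝ) = Lᵀ.mulVec v ⬝ᵥ Lᵀ.mulVec v := h5.symm
        _ = v ⬝ᵥ L.mulVec (Lᵀ.mulVec v) := h2
        _ ≤ euclNorm v * sigmaMax L := h3
        _ = sigmaMax L * euclNorm v := mul_comm _ _
    -- combine
    have hlam := lambdaMin_le A hxne
    have hN2v : 0 < ∑ i, v i ^ 2 := n2_pos hvne
    have hxsq : euclNorm x ^ 2 = ∑ i, v i ^ 2 := by rw [euclNorm_sq, hxn2]
    rw [hray, hxsq] at hlam
    have h6 : τ * sigmaMax L ^ 2 ≤ d j / (∑ i, v i ^ 2) := le_trans hmin hlam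
    have h7 : τ * sigmaMax L ^ 2 * (∑ i, v i ^ 2) ≤ d j := by
      rw [← le_div_iff₀ hN2v]; exact h6
    have h8 : (1:ℝ) ≤ sigmaMax L ^ 2 * (∑ i, v i ^ 2) := by
      have : (1:ℝ) ≤ (sigmaMax L * euclNorm v) ^ 2 := by nlinarith
      rw [mul_pow, euclNorm_sq] at this
      exact this
    nlinarith
  refine ⟨key, ?_, ?_⟩
  · have : (fun j => max τ |d j|) = d := by
      funext j
      have h1 : 0 < d j := lt_of_lt_of_le hτ (key j)
      rw [abs_of_pos h1, max_eq_right (key j)]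
    rw [this]
  · have : (fun j => max τ |d j|) = d := by
      funext j
      have h1 : 0 < d j := lt_of_lt_of_le hτ (key j)
      rw [abs_of_pos h1, max_eq_right (key j)]
    rw [this]
end

section
/- Let P be a p×p permutation matrix, L a p×p real unit lower-triangular matrix, Q a p×p real orthogonal matrix, and Λ = diag(λ_1, …, λ_p) a real diagonal matrix, and set H̄ = Pᵀ L Q Λ Qᵀ Lᵀ P. Assume H̄ is positive definite. Let τ > 0, let Λ̄ be the clipped diagonal matrix with entries max{τ, |λ_j|}, and set H̄̄ = Pᵀ L Q Λ̄ Qᵀ Lᵀ P. Then λ_min(H̄̄) ≥ σ_min(L)² · max{ τ, λ_min(H̄)/σ_max(L)² }, where σ_min(L) and σ_max(L) are the smallest and largest singular values of L. -/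
open Matrix

/-- The smallest singular value of a real matrix `L`, characterized as the infimum of
`‖L x‖ / ‖x‖` over nonzero `x`. -/
noncomputable def sigmaMin {p : ℕ} (L : Matrix (Fin p) (Fin p) ℝ) : ℝ :=
  ⨅ x : {x : Fin p → ℝ // x ≠ 0}, euclNorm (L.mulVec x.1) / euclNorm x.1

lemma sumSq_nonneg {p : ℕ} (x : Fin p → ℝ) : 0 ≤ ∑ i, x i ^ 2 :=
  Finset.sum_nonneg fun i _ => sq_nonneg _

lemma euclNorm_nonneg {p : ℕ} (x : Fin p → ℝ) : 0 ≤ euclNorm x := Real.sqrt_nonneg _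

lemma euclNorm_sq {p : ℕ} (x : Fin p → ℝ) : euclNorm x ^ 2 = ∑ i, x i ^ 2 :=
  Real.sq_sqrt (sumSq_nonneg x)

lemma dot_self_eq {p : ℕ} (x : Fin p → ℝ) : x ⬝ᵥ x = euclNorm x ^ 2 := by
  rw [euclNorm_sq]; simp [dotProduct, sq]

lemma euclNorm_pos {p : ℕ} {x : Fin p → ℝ} (hx : x ≠ 0) : 0 < euclNorm x := by
  apply Real.sqrt_pos.2
  rcases (sumSq_nonneg x).lt_or_eq with h | h
  · exact h
  · exfalso; apply hx; funext i
    have := (Finset.sum_eq_zero_iff_of_nonneg (fun i _ => sq_nonneg (x i))).1 h.symm i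
      (Finset.mem_univ i)
    exact pow_eq_zero_iff (by norm_num) |>.1 this

lemma dot_le_norm {p : ℕ} (x y : Fin p → ℝ) : x ⬝ᵥ y ≤ euclNorm x * euclNorm y := by
  have h := Finset.sum_mul_sq_le_sq_mul_sq Finset.univ x y
  have h2 : (x ⬝ᵥ y) ^ 2 ≤ (euclNorm x * euclNorm y) ^ 2 := by
    rw [mul_pow, euclNorm_sq, euclNorm_sq]; exact h
  nlinarith [h2, mul_nonneg (euclNorm_nonneg x) (euclNorm_nonneg y)]

-- dot product of two mulVecs
lemma dot_mulVec_mulVec {p : ℕ} (A B : Matrix (Fin p) (Fin p) ℝ) (x y : Fin p → ℝ) :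
    A.mulVec x ⬝ᵥ B.mulVec y = x ⬝ᵥ (Aᵀ * B).mulVec y := by
  rw [← Matrix.mulVec_mulVec, Matrix.dotProduct_mulVec x, Matrix.vecMul_transpose]

lemma euclNorm_zero {p : ℕ} : euclNorm (0 : Fin p → ℝ) = 0 := by simp [euclNorm]

lemma norm_mulVec_of_orth {p : ℕ} {A : Matrix (Fin p) (Fin p) ℝ} (h : Aᵀ * A = 1)
    (x : Fin p → ℝ) : euclNorm (A.mulVec x) = euclNorm x := by
  have hd : A.mulVec x ⬝ᵥ A.mulVec x = x ⬝ᵥ x := by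
    rw [dot_mulVec_mulVec, h, Matrix.one_mulVec]
  have h1 := dot_self_eq (A.mulVec x)
  have h2 := dot_self_eq x
  have : euclNorm (A.mulVec x) ^ 2 = euclNorm x ^ 2 := by rw [← h1, ← h2, hd]
  nlinarith [euclNorm_nonneg (A.mulVec x), euclNorm_nonneg x]

lemma sigmaMax_nonneg {p : ℕ} (A : Matrix (Fin p) (Fin p) ℝ) : 0 ≤ sigmaMax A :=
  Real.iSup_nonneg fun x => div_nonneg (euclNorm_nonneg _) (euclNorm_nonneg _)

lemma sigmaMin_nonneg {p : ℕ} (A : Matrix (Fin p) (Fin p) ℝ) : 0 ≤ sigmaMin A :=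
  Real.iInf_nonneg fun x => div_nonneg (euclNorm_nonneg _) (euclNorm_nonneg _)

lemma mulVec_norm_le_frob {p : ℕ} (A : Matrix (Fin p) (Fin p) ℝ) (x : Fin p → ℝ) :
    euclNorm (A.mulVec x) ≤ Real.sqrt (∑ i, ∑ j, A i j ^ 2) * euclNorm x := by
  have key : ∑ i, (A.mulVec x) i ^ 2 ≤ (∑ i, ∑ j, A i j ^ 2) * ∑ j, x j ^ 2 := by
    rw [Finset.sum_mul]
    refine Finset.sum_le_sum fun i _ => ?_
    have := Finset.sum_mul_sq_le_sq_mul_sq Finset.univ (fun j => A i j) x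
    simpa [Matrix.mulVec, dotProduct] using this
  calc euclNorm (A.mulVec x) = Real.sqrt (∑ i, (A.mulVec x) i ^ 2) := rfl
    _ ≤ Real.sqrt ((∑ i, ∑ j, A i j ^ 2) * ∑ j, x j ^ 2) := Real.sqrt_le_sqrt key
    _ = Real.sqrt (∑ i, ∑ j, A i j ^ 2) * euclNorm x := by
        rw [Real.sqrt_mul (x := ∑ i, ∑ j, A i j ^ 2) (Finset.sum_nonneg fun i _ => sumSq_nonneg _)]; rfl

lemma sigmaMax_bddAbove {p : ℕ} (A : Matrix (Fin p) (Fin p) ℝ) :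
    BddAbove (Set.range fun x : {x : Fin p → ℝ // x ≠ 0} =>
      euclNorm (A.mulVec x.1) / euclNorm x.1) := by
  refine ⟨Real.sqrt (∑ i, ∑ j, A i j ^ 2), ?_⟩
  rintro r ⟨x, rfl⟩
  rw [div_le_iff₀ (euclNorm_pos x.2)]
  exact mulVec_norm_le_frob A x.1

lemma norm_mulVec_le_sigmaMax {p : ℕ} (A : Matrix (Fin p) (Fin p) ℝ) (x : Fin p → ℝ) :
    euclNorm (A.mulVec x) ≤ sigmaMax A * euclNorm x := by
  by_cases hx : x = 0
  · subst hx; simp [Matrix.mulVec_zero, euclNorm_zero]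
  · have := le_ciSup (sigmaMax_bddAbove A) (⟨x, hx⟩ : {x : Fin p → ℝ // x ≠ 0})
    rw [div_le_iff₀ (euclNorm_pos hx)] at this
    exact this

lemma norm_transpose_mulVec_le_sigmaMax {p : ℕ} (A : Matrix (Fin p) (Fin p) ℝ)
    (y : Fin p → ℝ) : euclNorm (Aᵀ.mulVec y) ≤ sigmaMax A * euclNorm y := by
  set w := Aᵀ.mulVec y with hw
  have h1 : w ⬝ᵥ w = y ⬝ᵥ A.mulVec w := by
    rw [hw, dot_mulVec_mulVec, Matrix.transpose_transpose, ← Matrix.mulVec_mulVec]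
  have h2 : y ⬝ᵥ A.mulVec w ≤ euclNorm y * (sigmaMax A * euclNorm w) :=
    (dot_le_norm _ _).trans (by
      have := norm_mulVec_le_sigmaMax A w
      nlinarith [euclNorm_nonneg y])
  have h3 : euclNorm w ^ 2 ≤ euclNorm y * (sigmaMax A * euclNorm w) := by
    rw [← dot_self_eq]; exact h1.le.trans h2
  rcases (euclNorm_nonneg w).lt_or_eq with h | h
  · nlinarith
  · rw [← h]; exact mul_nonneg (sigmaMax_nonneg A) (euclNorm_nonneg y)

lemma sigmaMin_mul_le_norm_mulVec {p : ℕ} (A : Matrix (Fin p) (Fin p) ℝ) (x : Fin p → ℝ) :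
    sigmaMin A * euclNorm x ≤ euclNorm (A.mulVec x) := by
  by_cases hx : x = 0
  · subst hx; simp [Matrix.mulVec_zero, euclNorm_zero]
  · have hb : BddBelow (Set.range fun x : {x : Fin p → ℝ // x ≠ 0} =>
        euclNorm (A.mulVec x.1) / euclNorm x.1) := by
      refine ⟨0, ?_⟩; rintro r ⟨z, rfl⟩
      exact div_nonneg (euclNorm_nonneg _) (euclNorm_nonneg _)
    have := ciInf_le hb (⟨x, hx⟩ : {x : Fin p → ℝ // x ≠ 0})
    rw [le_div_iff₀ (euclNorm_pos hx)] at this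
    exact this

lemma sigmaMin_mul_le_norm_transpose_mulVec {p : ℕ} {A : Matrix (Fin p) (Fin p) ℝ}
    (hA : IsUnit A.det) (y : Fin p → ℝ) :
    sigmaMin A * euclNorm y ≤ euclNorm (Aᵀ.mulVec y) := by
  have hinv : A.mulVec (A⁻¹.mulVec y) = y := by
    rw [Matrix.mulVec_mulVec, Matrix.mul_nonsing_inv _ hA, Matrix.one_mulVec]
  have h1 : y ⬝ᵥ y = Aᵀ.mulVec y ⬝ᵥ A⁻¹.mulVec y := by
    rw [dot_mulVec_mulVec, Matrix.transpose_transpose, Matrix.mul_nonsing_inv _ hA,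
      Matrix.one_mulVec]
  have h2 : euclNorm y ^ 2 ≤ euclNorm (Aᵀ.mulVec y) * euclNorm (A⁻¹.mulVec y) := by
    rw [← dot_self_eq, h1]; exact dot_le_norm _ _
  have h3 : sigmaMin A * euclNorm (A⁻¹.mulVec y) ≤ euclNorm y := by
    have := sigmaMin_mul_le_norm_mulVec A (A⁻¹.mulVec y)
    rwa [hinv] at this
  rcases (euclNorm_nonneg y).lt_or_eq with h | h
  · nlinarith [sigmaMin_nonneg A, euclNorm_nonneg (Aᵀ.mulVec y),
      euclNorm_nonneg (A⁻¹.mulVec y)]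
  · rw [← h, mul_zero]; exact euclNorm_nonneg _

lemma rayleigh_num_eq {p : ℕ} (M : Matrix (Fin p) (Fin p) ℝ) (f : Fin p → ℝ)
    (x : Fin p → ℝ) :
    x ⬝ᵥ (M * Matrix.diagonal f * Mᵀ).mulVec x = ∑ j, f j * (Mᵀ.mulVec x) j ^ 2 := by
  rw [← Matrix.mulVec_mulVec, ← Matrix.mulVec_mulVec, Matrix.dotProduct_mulVec,
    ← Matrix.mulVec_transpose]
  simp only [dotProduct, Matrix.mulVec_diagonal]
  exact Finset.sum_congr rfl fun j _ => by ring

lemma permMatrix_transpose {p : ℕ} (e : Equiv.Perm (Fin p)) :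
    (e.permMatrix ℝ)ᵀ = Equiv.Perm.permMatrix ℝ e.symm := by
  show (e.toPEquiv.toMatrix)ᵀ = e.symm.toPEquiv.toMatrix
  rw [← PEquiv.toMatrix_symm, Equiv.toPEquiv_symm]

lemma permMatrix_orth {p : ℕ} (e : Equiv.Perm (Fin p)) :
    (e.permMatrix ℝ)ᵀ * e.permMatrix ℝ = 1 := by
  rw [permMatrix_transpose]
  show e.symm.toPEquiv.toMatrix * e.toPEquiv.toMatrix = 1
  rw [← PEquiv.toMatrix_trans, ← Equiv.toPEquiv_trans, Equiv.symm_trans_self,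
    Equiv.toPEquiv_refl, PEquiv.toMatrix_refl]

lemma permMatrix_orth' {p : ℕ} (e : Equiv.Perm (Fin p)) :
    e.permMatrix ℝ * (e.permMatrix ℝ)ᵀ = 1 := by
  rw [permMatrix_transpose]
  show e.toPEquiv.toMatrix * e.symm.toPEquiv.toMatrix = 1
  rw [← PEquiv.toMatrix_trans, ← Equiv.toPEquiv_trans, Equiv.self_trans_symm,
    Equiv.toPEquiv_refl, PEquiv.toMatrix_refl]
lemma single_ne_zero' {p : ℕ} (j : Fin p) : (Pi.single j 1 : Fin p → ℝ) ≠ 0 := by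
  intro h
  have := congrFun h j
  simp [Pi.single_apply] at this

lemma euclNorm_single {p : ℕ} (j : Fin p) : euclNorm (Pi.single j 1 : Fin p → ℝ) = 1 := by
  have : ∑ i, (Pi.single j 1 : Fin p → ℝ) i ^ 2 = 1 := by
    simp [Pi.single_apply]
  rw [euclNorm, this, Real.sqrt_one]

/-- Lower eigenvalue bound of Theorem 4 of the paper: with `H̄ = Pᵀ L Q Λ Qᵀ Lᵀ P`
positive definite and `H̄̄ = Pᵀ L Q Λ̄ Qᵀ Lᵀ P` its clipped version (`λ̄_j = max{τ, |λ_j|}`,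
`τ > 0`), one has `λ_min(H̄̄) ≥ σ_min(L)² max{τ, λ_min(H̄)/σ_max(L)²}`. -/
theorem stmt11 {p : ℕ} (P L Q : Matrix (Fin p) (Fin p) ℝ) (d : Fin p → ℝ)
    (τ : ℝ) (hτ : 0 < τ)
    (hP : ∃ e : Equiv.Perm (Fin p), P = e.permMatrix ℝ)
    (hLdiag : ∀ i, L i i = 1) (hLtri : ∀ i j : Fin p, i < j → L i j = 0)
    (hQ : Q * Qᵀ = 1) (hQ' : Qᵀ * Q = 1)
    (hPD : (Pᵀ * L * Q * Matrix.diagonal d * Qᵀ * Lᵀ * P).PosDef) :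
    sigmaMin L ^ 2 *
        max τ (lambdaMin (Pᵀ * L * Q * Matrix.diagonal d * Qᵀ * Lᵀ * P) / sigmaMax L ^ 2) ≤
      lambdaMin (Pᵀ * L * Q * (Matrix.diagonal fun j => max τ |d j|) * Qᵀ * Lᵀ * P) := by
  obtain ⟨e, hPe⟩ := hP
  have hPP : Pᵀ * P = 1 := by rw [hPe]; exact permMatrix_orth e
  have hPP' : P * Pᵀ = 1 := by rw [hPe]; exact permMatrix_orth' e
  rcases Nat.eq_zero_or_pos p with hp | hp
  · subst hp
    haveI : IsEmpty {x : Fin 0 → ℝ // x ≠ 0} :=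
      ⟨fun x => x.2 (funext fun i => Fin.elim0 i)⟩
    simp only [lambdaMin, sigmaMin, Real.iInf_of_isEmpty]
    norm_num
  haveI : Nonempty {x : Fin p → ℝ // x ≠ 0} := ⟨⟨Pi.single ⟨0, hp⟩ 1, single_ne_zero' _⟩⟩
  set M := Pᵀ * L * Q with hM
  have hMT : Mᵀ = Qᵀ * (Lᵀ * P) := by
    rw [hM]; simp [Matrix.transpose_mul, Matrix.mul_assoc]
  have hMrw : ∀ f : Fin p → ℝ,
      M * Matrix.diagonal f * Qᵀ * Lᵀ * P = M * Matrix.diagonal f * Mᵀ := by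
    intro f; rw [hMT]; simp [Matrix.mul_assoc]
  rw [hMrw d, hMrw (fun j => max τ |d j|)] at *
  have hMt : ∀ x : Fin p → ℝ, Mᵀ.mulVec x = Qᵀ.mulVec (Lᵀ.mulVec (P.mulVec x)) := by
    intro x; rw [hMT, ← Matrix.mulVec_mulVec, ← Matrix.mulVec_mulVec]
  have hQt : ∀ v, euclNorm (Qᵀ.mulVec v) = euclNorm v := fun v =>
    norm_mulVec_of_orth (by rw [Matrix.transpose_transpose]; exact hQ) v
  have hPn : ∀ v, euclNorm (P.mulVec v) = euclNorm v := fun v => norm_mulVec_of_orth hPP v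
  have hMt_le : ∀ x, euclNorm (Mᵀ.mulVec x) ≤ sigmaMax L * euclNorm x := by
    intro x
    rw [hMt, hQt, ← hPn x]
    exact norm_transpose_mulVec_le_sigmaMax L _
  have hLdet : IsUnit L.det := by
    have : L.det = 1 := by
      rw [Matrix.det_of_lowerTriangular L
        (fun i j h => hLtri i j (by exact_mod_cast h))]
      simp [hLdiag]
    rw [this]; exact isUnit_one
  have hMt_ge : ∀ x, sigmaMin L * euclNorm x ≤ euclNorm (Mᵀ.mulVec x) := by
    intro x
    rw [hMt, hQt, ← hPn x]
    exact sigmaMin_mul_le_norm_transpose_mulVec hLdet _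
  have hPdet : IsUnit (Pᵀ).det := IsUnit.of_mul_eq_one _ (by rw [← Matrix.det_mul, hPP, Matrix.det_one])
  have hQdet : IsUnit Q.det := IsUnit.of_mul_eq_one _ (by rw [← Matrix.det_mul, hQ, Matrix.det_one])
  have hMdet : IsUnit (Mᵀ).det := by
    rw [Matrix.det_transpose, hM, Matrix.det_mul, Matrix.det_mul]
    exact (hPdet.mul hLdet).mul hQdet
  -- positivity gives quotients nonneg
  have hbLow : BddBelow (Set.range fun x : {x : Fin p → ℝ // x ≠ 0} =>
      x.1 ⬝ᵥ (M * Matrix.diagonal d * Mᵀ).mulVec x.1 / euclNorm x.1 ^ 2) := by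
    refine ⟨0, ?_⟩; rintro r ⟨z, rfl⟩
    refine div_nonneg (le_of_lt ?_) (sq_nonneg _)
    simpa using hPD.dotProduct_mulVec_pos z.2
  -- key: lower bound on clipped entries
  have hkey : ∀ j, lambdaMin (M * Matrix.diagonal d * Mᵀ) / sigmaMax L ^ 2 ≤ max τ |d j| := by
    intro j
    set xj := (Mᵀ)⁻¹.mulVec (Pi.single j 1) with hxjdef
    have hxj : Mᵀ.mulVec xj = Pi.single j 1 := by
      rw [hxjdef, Matrix.mulVec_mulVec, Matrix.mul_nonsing_inv _ hMdet, Matrix.one_mulVec]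
    have hxj0 : xj ≠ 0 := by
      intro h
      exact single_ne_zero' j (by rw [← hxj, h, Matrix.mulVec_zero])
    have hnum : xj ⬝ᵥ (M * Matrix.diagonal d * Mᵀ).mulVec xj = d j := by
      rw [rayleigh_num_eq, hxj]
      simp [Pi.single_apply]
    have hdpos : 0 < d j := by
      have h := hPD.dotProduct_mulVec_pos hxj0
      simpa [hnum] using h
    have hray : lambdaMin (M * Matrix.diagonal d * Mᵀ) ≤ d j / euclNorm xj ^ 2 := by
      have := ciInf_le hbLow ⟨xj, hxj0⟩
      rw [lambdaMin]
      simpa [hnum] using this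
    have h1le : (1 : ℝ) ≤ sigmaMax L * euclNorm xj := by
      have h := hMt_le xj
      rwa [hxj, euclNorm_single] at h
    have hnpos : 0 < euclNorm xj := euclNorm_pos hxj0
    have hσ : 0 < sigmaMax L := by nlinarith
    have hrn : lambdaMin (M * Matrix.diagonal d * Mᵀ) * euclNorm xj ^ 2 ≤ d j := by
      rw [← le_div_iff₀ (pow_pos hnpos 2)]; exact hray
    have hdj : lambdaMin (M * Matrix.diagonal d * Mᵀ) / sigmaMax L ^ 2 ≤ d j := by
      rw [div_le_iff₀ (pow_pos hσ 2)]
      have hsq : (1:ℝ) ≤ sigmaMax L ^ 2 * euclNorm xj ^ 2 := by nlinarith [h1le, hσ, hnpos]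
      have hd2 : d j ≤ d j * (sigmaMax L ^ 2 * euclNorm xj ^ 2) := by nlinarith [hdpos, hsq]
      have hfin : lambdaMin (M * Matrix.diagonal d * Mᵀ) * euclNorm xj ^ 2 ≤
          d j * (sigmaMax L ^ 2 * euclNorm xj ^ 2) := hrn.trans hd2
      nlinarith [hfin, pow_pos hnpos 2]
    exact hdj.trans ((le_abs_self _).trans (le_max_right _ _))
  set c := max τ (lambdaMin (M * Matrix.diagonal d * Mᵀ) / sigmaMax L ^ 2) with hc
  have hc0 : 0 ≤ c := le_trans hτ.le (le_max_left _ _)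
  have hcle : ∀ j, c ≤ max τ |d j| := fun j => max_le (le_max_left _ _) (hkey j)
  rw [lambdaMin]
  refine le_ciInf fun x => ?_
  obtain ⟨x, hx⟩ := x
  rw [rayleigh_num_eq, le_div_iff₀ (pow_pos (euclNorm_pos hx) 2)]
  have hy := hMt_ge x
  have h2 : c * ∑ j, (Mᵀ.mulVec x) j ^ 2 ≤ ∑ j, max τ |d j| * (Mᵀ.mulVec x) j ^ 2 := by
    rw [Finset.mul_sum]
    exact Finset.sum_le_sum fun j _ => mul_le_mul_of_nonneg_right (hcle j) (sq_nonneg _)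
  have h3 : ∑ j, (Mᵀ.mulVec x) j ^ 2 = euclNorm (Mᵀ.mulVec x) ^ 2 := (euclNorm_sq _).symm
  have h4 : sigmaMin L ^ 2 * euclNorm x ^ 2 ≤ euclNorm (Mᵀ.mulVec x) ^ 2 := by
    have := mul_le_mul hy hy (mul_nonneg (sigmaMin_nonneg L) (euclNorm_nonneg x))
      (euclNorm_nonneg _)
    nlinarith [this]
  calc sigmaMin L ^ 2 * c * euclNorm x ^ 2 = c * (sigmaMin L ^ 2 * euclNorm x ^ 2) := by ring
    _ ≤ c * euclNorm (Mᵀ.mulVec x) ^ 2 := mul_le_mul_of_nonneg_left h4 hc0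
    _ = c * ∑ j, (Mᵀ.mulVec x) j ^ 2 := by rw [h3]
    _ ≤ ∑ j, max τ |d j| * (Mᵀ.mulVec x) j ^ 2 := h2
end

section
/- Let P be a p×p permutation matrix, L a p×p real unit lower-triangular matrix, Q a p×p real orthogonal matrix, and Λ a real diagonal matrix, and set H̄ = Pᵀ L Q Λ Qᵀ Lᵀ P. Assume H̄ is positive definite with λ_min(H̄) ≥ λ̲ > 0 and ‖H̄‖₂ ≤ λ̄ for constants 0 < λ̲ ≤ λ̄. Let τ > 0, let Λ̄ be the clipped diagonal matrix with entries max{τ, |λ_j|}, and set H̄̄ = Pᵀ L Q Λ̄ Qᵀ Lᵀ P. Then the condition number of H̄̄ satisfies κ(H̄̄) = λ_max(H̄̄)/λ_min(H̄̄) ≤ (σ_max(L)²/σ_min(L)²) · max{τ, λ̄/σ_min(L)²} / max{τ, λ̲/σ_max(L)²}. -/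
open Matrix

/-- The largest eigenvalue of a symmetric real matrix, characterized as the supremum
of the Rayleigh quotient `xᵀ A x / (xᵀ x)` over nonzero `x`. -/
noncomputable def lambdaMax {p : ℕ} (A : Matrix (Fin p) (Fin p) ℝ) : ℝ :=
  ⨆ x : {x : Fin p → ℝ // x ≠ 0}, x.1 ⬝ᵥ A.mulVec x.1 / euclNorm x.1 ^ 2

namespace Aux13

variable {p : ℕ}

lemma en_nonneg (x : Fin p → ℝ) : 0 ≤ euclNorm x := Real.sqrt_nonneg _

lemma en_sq (x : Fin p → ℝ) : euclNorm x ^ 2 = ∑ i, x i ^ 2 :=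
  Real.sq_sqrt (Finset.sum_nonneg fun i _ => sq_nonneg _)

lemma dot_self_eq (x : Fin p → ℝ) : x ⬝ᵥ x = euclNorm x ^ 2 := by
  rw [en_sq]; simp [dotProduct, sq]

lemma en_pos {x : Fin p → ℝ} (h : x ≠ 0) : 0 < euclNorm x := by
  rcases (en_nonneg x).lt_or_eq with h' | h'
  · exact h'
  have hs : ∑ i, x i ^ 2 = 0 := by
    have := en_sq x; rw [← h'] at this; simpa using this.symm
  exact absurd (funext fun i => by
    have h2 := (Finset.sum_eq_zero_iff_of_nonneg (fun i _ => sq_nonneg (x i))).1 hs i (Finset.mem_univ i)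
    simpa using pow_eq_zero_iff (two_ne_zero) |>.1 h2) h

lemma abs_le_en (x : Fin p → ℝ) (i : Fin p) : |x i| ≤ euclNorm x := by
  rw [← Real.sqrt_sq_eq_abs]
  exact Real.sqrt_le_sqrt (Finset.single_le_sum (fun j _ => sq_nonneg (x j)) (Finset.mem_univ i))

/-- Cauchy–Schwarz. -/
lemma dot_le (x y : Fin p → ℝ) : x ⬝ᵥ y ≤ euclNorm x * euclNorm y := by
  have h := Finset.sum_mul_sq_le_sq_mul_sq Finset.univ x y
  have h2 : (x ⬝ᵥ y) ^ 2 ≤ (euclNorm x * euclNorm y) ^ 2 := by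
    rw [mul_pow, en_sq, en_sq]; simpa [dotProduct] using h
  exact le_of_sq_le_sq h2 (mul_nonneg (en_nonneg x) (en_nonneg y))

/-- Crude operator-norm bound for a matrix. -/
noncomputable def rowB (A : Matrix (Fin p) (Fin p) ℝ) : ℝ :=
  Real.sqrt (∑ i, (∑ j, |A i j|) ^ 2)

lemma rowB_nonneg (A : Matrix (Fin p) (Fin p) ℝ) : 0 ≤ rowB A := Real.sqrt_nonneg _

lemma en_mulVec_le (A : Matrix (Fin p) (Fin p) ℝ) (x : Fin p → ℝ) :
    euclNorm (A *ᵥ x) ≤ rowB A * euclNorm x := by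
  have key : ∀ i, ((A *ᵥ x) i) ^ 2 ≤ (∑ j, |A i j|) ^ 2 * euclNorm x ^ 2 := by
    intro i
    rw [← mul_pow]
    have h1 : |(A *ᵥ x) i| ≤ (∑ j, |A i j|) * euclNorm x := by
      calc |(A *ᵥ x) i| = |∑ j, A i j * x j| := by simp [mulVec, dotProduct]
        _ ≤ ∑ j, |A i j * x j| := Finset.abs_sum_le_sum_abs _ _
        _ ≤ ∑ j, |A i j| * euclNorm x := by
            refine Finset.sum_le_sum fun j _ => ?_
            rw [abs_mul]
            exact mul_le_mul_of_nonneg_left (abs_le_en x j) (abs_nonneg _)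
        _ = (∑ j, |A i j|) * euclNorm x := by rw [Finset.sum_mul]
    calc ((A *ᵥ x) i) ^ 2 = |(A *ᵥ x) i| ^ 2 := (sq_abs _).symm
      _ ≤ ((∑ j, |A i j|) * euclNorm x) ^ 2 := by
          exact pow_le_pow_left₀ (abs_nonneg _) h1 2
  have hsum : ∑ i, ((A *ᵥ x) i) ^ 2 ≤ (∑ i, (∑ j, |A i j|) ^ 2) * euclNorm x ^ 2 := by
    rw [Finset.sum_mul]
    exact Finset.sum_le_sum fun i _ => key i
  have : euclNorm (A *ᵥ x) ^ 2 ≤ (rowB A * euclNorm x) ^ 2 := by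
    rw [en_sq, mul_pow, rowB, Real.sq_sqrt (Finset.sum_nonneg fun i _ => sq_nonneg _)]
    exact hsum
  exact le_of_sq_le_sq this (mul_nonneg (rowB_nonneg A) (en_nonneg x))

variable (hp : 0 < p)

lemma nonempty_sub (hp : 0 < p) : Nonempty {x : Fin p → ℝ // x ≠ 0} := by
  refine ⟨⟨fun _ => 1, ?_⟩⟩
  intro h
  have := congrFun h ⟨0, hp⟩
  simpa using this

lemma bddAbove_sigma (L : Matrix (Fin p) (Fin p) ℝ) :
    BddAbove (Set.range fun x : {x : Fin p → ℝ // x ≠ 0} =>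
      euclNorm (L.mulVec x.1) / euclNorm x.1) := by
  refine ⟨rowB L, fun r hr => ?_⟩
  obtain ⟨x, rfl⟩ := hr
  rw [div_le_iff₀ (en_pos x.2)]
  exact en_mulVec_le L x.1

lemma bddBelow_sigma (L : Matrix (Fin p) (Fin p) ℝ) :
    BddBelow (Set.range fun x : {x : Fin p → ℝ // x ≠ 0} =>
      euclNorm (L.mulVec x.1) / euclNorm x.1) := by
  refine ⟨0, fun r hr => ?_⟩
  obtain ⟨x, rfl⟩ := hr
  exact div_nonneg (en_nonneg _) (en_nonneg _)

lemma sigmaMax_bound (hp : 0 < p) (L : Matrix (Fin p) (Fin p) ℝ) (x : Fin p → ℝ) :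
    euclNorm (L *ᵥ x) ≤ sigmaMax L * euclNorm x := by
  have := nonempty_sub (p := p) hp
  by_cases hx : x = 0
  · subst hx; simp [euclNorm, Matrix.mulVec_zero]
  · have h1 : euclNorm (L *ᵥ x) / euclNorm x ≤ sigmaMax L :=
      le_ciSup (bddAbove_sigma L) (⟨x, hx⟩ : {x : Fin p → ℝ // x ≠ 0})
    rw [div_le_iff₀ (en_pos hx)] at h1
    linarith

lemma sigmaMin_bound (L : Matrix (Fin p) (Fin p) ℝ) (x : Fin p → ℝ) :
    sigmaMin L * euclNorm x ≤ euclNorm (L *ᵥ x) := by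
  by_cases hp : 0 < p
  · by_cases hx : x = 0
    · subst hx; simp [euclNorm, Matrix.mulVec_zero]
    · have h1 : sigmaMin L ≤ euclNorm (L *ᵥ x) / euclNorm x :=
        ciInf_le (bddBelow_sigma L) (⟨x, hx⟩ : {x : Fin p → ℝ // x ≠ 0})
      rw [le_div_iff₀ (en_pos hx)] at h1
      linarith
  · have : p = 0 := by omega
    subst this
    have hx : x = 0 := funext fun i => absurd i.2 (by omega)
    subst hx; simp [euclNorm, Matrix.mulVec_zero]

lemma sigmaMin_nonneg (L : Matrix (Fin p) (Fin p) ℝ) : 0 ≤ sigmaMin L := by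
  by_cases hp : 0 < p
  · have := nonempty_sub (p := p) hp
    exact le_ciInf fun x => div_nonneg (en_nonneg _) (en_nonneg _)
  · have : p = 0 := by omega
    subst this
    have : IsEmpty {x : Fin 0 → ℝ // x ≠ 0} := by
      refine ⟨fun x => x.2 (funext fun i => absurd i.2 (by omega))⟩
    exact le_of_eq (Real.iInf_of_isEmpty _).symm

lemma sigmaMax_nonneg (hp : 0 < p) (L : Matrix (Fin p) (Fin p) ℝ) : 0 ≤ sigmaMax L := by
  have hne := nonempty_sub (p := p) hp
  obtain ⟨x⟩ := hne
  exact le_trans (div_nonneg (en_nonneg _) (en_nonneg _)) (le_ciSup (bddAbove_sigma L) x)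

/-- If `B * L = 1` then `sigmaMin L > 0`. -/
lemma sigmaMin_pos (hp : 0 < p) (L B : Matrix (Fin p) (Fin p) ℝ) (hB : B * L = 1) :
    0 < sigmaMin L := by
  have hne := nonempty_sub (p := p) hp
  set C : ℝ := max (rowB B) 1 with hC
  have hC1 : 0 < C := lt_of_lt_of_le one_pos (le_max_right _ _)
  have key : ∀ x : {x : Fin p → ℝ // x ≠ 0}, 1 / C ≤ euclNorm (L *ᵥ x.1) / euclNorm x.1 := by
    intro x
    have h1 : euclNorm x.1 = euclNorm (B *ᵥ (L *ᵥ x.1)) := by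
      rw [Matrix.mulVec_mulVec, hB, Matrix.one_mulVec]
    have h2 : euclNorm (B *ᵥ (L *ᵥ x.1)) ≤ C * euclNorm (L *ᵥ x.1) :=
      le_trans (en_mulVec_le B _) (mul_le_mul_of_nonneg_right (le_max_left _ _) (en_nonneg _))
    rw [div_le_div_iff₀ hC1 (en_pos x.2), one_mul]
    · linarith [h1 ▸ h2]
  refine lt_of_lt_of_le (by positivity) (le_ciInf key)

lemma sigmaMax_pos (hp : 0 < p) (L B : Matrix (Fin p) (Fin p) ℝ) (hB : B * L = 1) :
    0 < sigmaMax L := by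
  have hne := nonempty_sub (p := p) hp
  obtain ⟨x⟩ := hne
  have h1 : sigmaMin L ≤ euclNorm (L *ᵥ x.1) / euclNorm x.1 := ciInf_le (bddBelow_sigma L) x
  have h2 : euclNorm (L *ᵥ x.1) / euclNorm x.1 ≤ sigmaMax L := le_ciSup (bddAbove_sigma L) x
  exact lt_of_lt_of_le (sigmaMin_pos hp L B hB) (h1.trans h2)

/-- If `Aᵀ * A = 1` then `A` preserves the Euclidean norm. -/
lemma en_orth (A : Matrix (Fin p) (Fin p) ℝ) (hA : Aᵀ * A = 1) (x : Fin p → ℝ) :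
    euclNorm (A *ᵥ x) = euclNorm x := by
  have h : (A *ᵥ x) ⬝ᵥ (A *ᵥ x) = x ⬝ᵥ x := by
    rw [Matrix.dotProduct_mulVec, ← Matrix.mulVec_transpose, Matrix.mulVec_mulVec, hA,
      Matrix.one_mulVec]
  have h2 := dot_self_eq (A *ᵥ x)
  have h3 := dot_self_eq x
  have h4 : euclNorm (A *ᵥ x) ^ 2 = euclNorm x ^ 2 := by rw [← h2, ← h3, h]
  nlinarith [en_nonneg (A *ᵥ x), en_nonneg x]

lemma en_transpose_le (hp : 0 < p) (L : Matrix (Fin p) (Fin p) ℝ) (x : Fin p → ℝ) :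
    euclNorm (Lᵀ *ᵥ x) ≤ sigmaMax L * euclNorm x := by
  set w := Lᵀ *ᵥ x with hw
  have h1 : w ⬝ᵥ w = (L *ᵥ w) ⬝ᵥ x := by
    rw [hw]
    conv_lhs => rw [Matrix.dotProduct_mulVec, Matrix.vecMul_transpose]
  have h2 : w ⬝ᵥ w ≤ euclNorm (L *ᵥ w) * euclNorm x := h1 ▸ dot_le _ _
  have h3 : euclNorm (L *ᵥ w) ≤ sigmaMax L * euclNorm w := sigmaMax_bound hp L w
  have h4 : euclNorm w ^ 2 ≤ sigmaMax L * euclNorm w * euclNorm x := by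
    rw [← dot_self_eq]
    calc w ⬝ᵥ w ≤ euclNorm (L *ᵥ w) * euclNorm x := h2
      _ ≤ sigmaMax L * euclNorm w * euclNorm x :=
        mul_le_mul_of_nonneg_right h3 (en_nonneg x)
  rcases (en_nonneg w).lt_or_eq with hpos | hzero
  · nlinarith [en_nonneg x, sigmaMax_nonneg hp L]
  · rw [← hzero]
    exact mul_nonneg (sigmaMax_nonneg hp L) (en_nonneg x)

lemma en_transpose_ge (hp : 0 < p) (L B : Matrix (Fin p) (Fin p) ℝ)
    (hLB : L * B = 1) (x : Fin p → ℝ) :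
    sigmaMin L * euclNorm x ≤ euclNorm (Lᵀ *ᵥ x) := by
  have h1 : x ⬝ᵥ x = (B *ᵥ x) ⬝ᵥ (Lᵀ *ᵥ x) := by
    rw [Matrix.dotProduct_mulVec, Matrix.vecMul_transpose, Matrix.mulVec_mulVec, hLB,
      Matrix.one_mulVec]
  have h2 : x ⬝ᵥ x ≤ euclNorm (B *ᵥ x) * euclNorm (Lᵀ *ᵥ x) := h1 ▸ dot_le _ _
  have h3 : sigmaMin L * euclNorm (B *ᵥ x) ≤ euclNorm x := by
    have := sigmaMin_bound L (B *ᵥ x)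
    rwa [Matrix.mulVec_mulVec, hLB, Matrix.one_mulVec] at this
  have h4 : euclNorm x ^ 2 ≤ euclNorm (B *ᵥ x) * euclNorm (Lᵀ *ᵥ x) := by
    rw [← dot_self_eq]; exact h2
  rcases (en_nonneg x).lt_or_eq with hpos | hzero
  · nlinarith [en_nonneg (B *ᵥ x), en_nonneg (Lᵀ *ᵥ x), sigmaMin_nonneg L]
  · rw [← hzero, mul_zero]
    exact en_nonneg _

lemma quad_diag (f : Fin p → ℝ) (y : Fin p → ℝ) :
    y ⬝ᵥ ((Matrix.diagonal f) *ᵥ y) = ∑ j, f j * y j ^ 2 := by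
  simp only [dotProduct, Matrix.mulVec_diagonal]
  exact Finset.sum_congr rfl fun j _ => by ring

lemma rayleigh_congr (M D : Matrix (Fin p) (Fin p) ℝ) (x : Fin p → ℝ) :
    x ⬝ᵥ ((Mᵀ * D * M) *ᵥ x) = (M *ᵥ x) ⬝ᵥ (D *ᵥ (M *ᵥ x)) := by
  rw [← Matrix.mulVec_mulVec, ← Matrix.mulVec_mulVec, Matrix.dotProduct_mulVec,
    Matrix.vecMul_transpose]

lemma bddAbove_rayleigh (A : Matrix (Fin p) (Fin p) ℝ) :
    BddAbove (Set.range fun x : {x : Fin p → ℝ // x ≠ 0} =>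
      x.1 ⬝ᵥ A.mulVec x.1 / euclNorm x.1 ^ 2) := by
  refine ⟨rowB A, fun r hr => ?_⟩
  obtain ⟨x, rfl⟩ := hr
  rw [div_le_iff₀ (pow_pos (en_pos x.2) 2)]
  calc x.1 ⬝ᵥ A.mulVec x.1 ≤ euclNorm x.1 * euclNorm (A *ᵥ x.1) := dot_le _ _
    _ ≤ euclNorm x.1 * (rowB A * euclNorm x.1) :=
      mul_le_mul_of_nonneg_left (en_mulVec_le A x.1) (en_nonneg _)
    _ = rowB A * euclNorm x.1 ^ 2 := by ring

lemma lambdaMax_le (hp : 0 < p) (A : Matrix (Fin p) (Fin p) ℝ) (c : ℝ)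
    (h : ∀ x : Fin p → ℝ, x ≠ 0 → x ⬝ᵥ A.mulVec x ≤ c * euclNorm x ^ 2) :
    lambdaMax A ≤ c := by
  have := nonempty_sub (p := p) hp
  exact ciSup_le fun x => (div_le_iff₀ (pow_pos (en_pos x.2) 2)).2 (h x.1 x.2)

lemma le_lambdaMin (hp : 0 < p) (A : Matrix (Fin p) (Fin p) ℝ) (c : ℝ)
    (h : ∀ x : Fin p → ℝ, x ≠ 0 → c * euclNorm x ^ 2 ≤ x ⬝ᵥ A.mulVec x) :
    c ≤ lambdaMin A := by
  have := nonempty_sub (p := p) hp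
  exact le_ciInf fun x => (le_div_iff₀ (pow_pos (en_pos x.2) 2)).2 (h x.1 x.2)

lemma rayleigh_le_lambdaMax (A : Matrix (Fin p) (Fin p) ℝ) (x : Fin p → ℝ) (hx : x ≠ 0) :
    x ⬝ᵥ A.mulVec x / euclNorm x ^ 2 ≤ lambdaMax A :=
  le_ciSup (bddAbove_rayleigh A) (⟨x, hx⟩ : {x : Fin p → ℝ // x ≠ 0})

lemma lambdaMin_le_rayleigh (A : Matrix (Fin p) (Fin p) ℝ) (hA : A.PosDef)
    (x : Fin p → ℝ) (hx : x ≠ 0) :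
    lambdaMin A ≤ x ⬝ᵥ A.mulVec x / euclNorm x ^ 2 := by
  refine ciInf_le ⟨0, fun r hr => ?_⟩ (⟨x, hx⟩ : {x : Fin p → ℝ // x ≠ 0})
  obtain ⟨y, rfl⟩ := hr
  have h := hA.dotProduct_mulVec_pos y.2
  have h' : 0 < y.1 ⬝ᵥ A.mulVec y.1 := by simpa using h
  positivity

lemma unit_lower_inv (L : Matrix (Fin p) (Fin p) ℝ)
    (hLdiag : ∀ i, L i i = 1) (hLtri : ∀ i j : Fin p, i < j → L i j = 0) :
    L * L⁻¹ = 1 ∧ L⁻¹ * L = 1 := by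
  have hbt : Lᵀ.BlockTriangular id := fun i j hij => hLtri j i hij
  have hdet : Lᵀ.det = 1 := by
    rw [Matrix.det_of_upperTriangular hbt]
    simp [Matrix.transpose_apply, hLdiag]
  have hdetL : L.det = 1 := by rw [← Matrix.det_transpose]; exact hdet
  have hu : IsUnit L.det := hdetL ▸ isUnit_one
  exact ⟨Matrix.mul_nonsing_inv L hu, Matrix.nonsing_inv_mul L hu⟩

end Aux13


open Aux13

/-- Condition-number bound of Theorem 4 of the paper: with `H̄ = Pᵀ L Q Λ Qᵀ Lᵀ P`
positive definite, `λ_min(H̄) ≥ λ̲ > 0` and spectral norm `‖H̄‖₂ = λ_max(H̄) ≤ λ̄`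
(`λ̲ ≤ λ̄`), and `H̄̄ = Pᵀ L Q Λ̄ Qᵀ Lᵀ P` the clipped version (`λ̄_j = max{τ, |λ_j|}`,
`τ > 0`), the condition number `κ(H̄̄) = λ_max(H̄̄)/λ_min(H̄̄)` satisfies
`κ(H̄̄) ≤ (σ_max(L)²/σ_min(L)²) max{τ, λ̄/σ_min(L)²} / max{τ, λ̲/σ_max(L)²}`. -/
theorem stmt13 {p : ℕ} (P L Q : Matrix (Fin p) (Fin p) ℝ) (d : Fin p → ℝ)
    (τ lamLo lamHi : ℝ) (hτ : 0 < τ) (hlamLo : 0 < lamLo) (hlamLoHi : lamLo ≤ lamHi)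
    (hP : ∃ e : Equiv.Perm (Fin p), P = e.permMatrix ℝ)
    (hLdiag : ∀ i, L i i = 1) (hLtri : ∀ i j : Fin p, i < j → L i j = 0)
    (hQ : Q * Qᵀ = 1) (hQ' : Qᵀ * Q = 1)
    (hPD : (Pᵀ * L * Q * Matrix.diagonal d * Qᵀ * Lᵀ * P).PosDef)
    (hlo : lamLo ≤ lambdaMin (Pᵀ * L * Q * Matrix.diagonal d * Qᵀ * Lᵀ * P))
    (hhi : lambdaMax (Pᵀ * L * Q * Matrix.diagonal d * Qᵀ * Lᵀ * P) ≤ lamHi) :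
    lambdaMax (Pᵀ * L * Q * (Matrix.diagonal fun j => max τ |d j|) * Qᵀ * Lᵀ * P) /
        lambdaMin (Pᵀ * L * Q * (Matrix.diagonal fun j => max τ |d j|) * Qᵀ * Lᵀ * P) ≤
      sigmaMax L ^ 2 / sigmaMin L ^ 2 *
        (max τ (lamHi / sigmaMin L ^ 2) / max τ (lamLo / sigmaMax L ^ 2)) := by
  by_cases hp : 0 < p
  case neg =>
    -- degenerate case `p = 0`: the hypothesis `hlo` is contradictory
    exfalso
    have hp0 : p = 0 := by omega
    subst hp0
    have hie : IsEmpty {x : Fin 0 → ℝ // x ≠ 0} :=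
      ⟨fun x => x.2 (funext fun i => i.elim0)⟩
    have h0 : lambdaMin (Pᵀ * L * Q * Matrix.diagonal d * Qᵀ * Lᵀ * P) = 0 :=
      Real.iInf_of_isEmpty _
    rw [h0] at hlo
    linarith
  case pos =>
  obtain ⟨e, rfl⟩ := hP
  set P := e.permMatrix ℝ with hPdef
  have hPtP : Pᵀ * P = 1 := by
    rw [hPdef, ← PEquiv.toMatrix_symm, ← PEquiv.toMatrix_trans, ← Equiv.toPEquiv_symm,
      ← Equiv.toPEquiv_trans]
    simp
  have hPPt : P * Pᵀ = 1 := by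
    rw [hPdef, ← PEquiv.toMatrix_symm, ← PEquiv.toMatrix_trans, ← Equiv.toPEquiv_symm,
      ← Equiv.toPEquiv_trans]
    simp
  set M : Matrix (Fin p) (Fin p) ℝ := Qᵀ * Lᵀ * P with hM
  have hMT : Mᵀ = Pᵀ * L * Q := by
    rw [hM]; simp [Matrix.transpose_mul, Matrix.mul_assoc]
  have hA : ∀ D : Matrix (Fin p) (Fin p) ℝ,
      Pᵀ * L * Q * D * Qᵀ * Lᵀ * P = Mᵀ * D * M := by
    intro D
    rw [hMT, hM]
    simp [Matrix.mul_assoc]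
  obtain ⟨hLB, hBL⟩ := unit_lower_inv L hLdiag hLtri
  have hσmin : 0 < sigmaMin L := sigmaMin_pos hp L L⁻¹ hBL
  have hσmax : 0 < sigmaMax L := sigmaMax_pos hp L L⁻¹ hBL
  -- norms of `M *ᵥ x`
  have hMsplit : ∀ x : Fin p → ℝ, M *ᵥ x = Qᵀ *ᵥ (Lᵀ *ᵥ (P *ᵥ x)) := by
    intro x
    rw [hM, ← Matrix.mulVec_mulVec, ← Matrix.mulVec_mulVec]
  have hQt_orth : ∀ z : Fin p → ℝ, euclNorm (Qᵀ *ᵥ z) = euclNorm z := by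
    intro z
    refine en_orth Qᵀ ?_ z
    rwa [Matrix.transpose_transpose]
  have hP_orth : ∀ z : Fin p → ℝ, euclNorm (P *ᵥ z) = euclNorm z :=
    fun z => en_orth P hPtP z
  have hMhi : ∀ x : Fin p → ℝ, euclNorm (M *ᵥ x) ≤ sigmaMax L * euclNorm x := by
    intro x
    rw [hMsplit, hQt_orth]
    calc euclNorm (Lᵀ *ᵥ (P *ᵥ x)) ≤ sigmaMax L * euclNorm (P *ᵥ x) :=
          en_transpose_le hp L _
      _ = sigmaMax L * euclNorm x := by rw [hP_orth]
  have hMlo : ∀ x : Fin p → ℝ, sigmaMin L * euclNorm x ≤ euclNorm (M *ᵥ x) := by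
    intro x
    rw [hMsplit, hQt_orth]
    calc sigmaMin L * euclNorm x = sigmaMin L * euclNorm (P *ᵥ x) := by rw [hP_orth]
      _ ≤ euclNorm (Lᵀ *ᵥ (P *ᵥ x)) := en_transpose_ge hp L L⁻¹ hLB _
  -- inverse of M
  set N : Matrix (Fin p) (Fin p) ℝ := Pᵀ * (L⁻¹)ᵀ * Q with hNdef
  have hMN : M * N = 1 := by
    rw [hM, hNdef]
    have h1 : Qᵀ * Lᵀ * P * (Pᵀ * (L⁻¹)ᵀ * Q)
        = Qᵀ * (Lᵀ * ((P * Pᵀ) * ((L⁻¹)ᵀ * Q))) := by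
      simp [Matrix.mul_assoc]
    rw [h1, hPPt, Matrix.one_mul, ← Matrix.mul_assoc Lᵀ, ← Matrix.transpose_mul, hBL]
    simp [hQ']
  -- entrywise eigenvalue bounds
  have hdbound : ∀ j : Fin p,
      lamLo / sigmaMax L ^ 2 ≤ d j ∧ d j ≤ lamHi / sigmaMin L ^ 2 := by
    intro j
    set ej : Fin p → ℝ := Pi.single j 1 with hej
    set xj : Fin p → ℝ := N *ᵥ ej with hxj
    have hMx : M *ᵥ xj = ej := by
      rw [hxj, Matrix.mulVec_mulVec, hMN, Matrix.one_mulVec]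
    have hejnorm : euclNorm ej = 1 := by
      have hsum : ∑ i, ej i ^ 2 = 1 := by
        rw [hej, Finset.sum_eq_single j]
        · simp
        · intro b _ hb
          simp [Pi.single_apply, hb]
        · intro h; exact absurd (Finset.mem_univ j) h
      rw [euclNorm, hsum, Real.sqrt_one]
    have hejne : ej ≠ 0 := by
      intro h
      have := congrFun h j
      simp [hej] at this
    have hxjne : xj ≠ 0 := by
      intro h
      rw [h, Matrix.mulVec_zero] at hMx
      exact hejne hMx.symm
    have henx : 0 < euclNorm xj := en_pos hxjne
    have hub : euclNorm xj ≤ 1 / sigmaMin L := by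
      have := hMlo xj
      rw [hMx, hejnorm] at this
      rw [le_div_iff₀ hσmin]
      linarith
    have hlb : 1 / sigmaMax L ≤ euclNorm xj := by
      have := hMhi xj
      rw [hMx, hejnorm] at this
      rw [div_le_iff₀ hσmax]
      linarith
    have hquad : xj ⬝ᵥ ((Pᵀ * L * Q * Matrix.diagonal d * Qᵀ * Lᵀ * P) *ᵥ xj) = d j := by
      rw [hA (Matrix.diagonal d), rayleigh_congr, hMx, quad_diag, hej]
      rw [Finset.sum_eq_single j]
      · simp
      · intro b _ hb
        simp [Pi.single_apply, hb]
      · intro h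
        exact absurd (Finset.mem_univ j) h
    have hloj : lamLo ≤ d j / euclNorm xj ^ 2 := by
      have h1 := lambdaMin_le_rayleigh _ hPD xj hxjne
      rw [hquad] at h1
      exact le_trans hlo h1
    have hhij : d j / euclNorm xj ^ 2 ≤ lamHi := by
      have h1 := rayleigh_le_lambdaMax (Pᵀ * L * Q * Matrix.diagonal d * Qᵀ * Lᵀ * P) xj hxjne
      rw [hquad] at h1
      exact le_trans h1 hhi
    have hloj' : lamLo * euclNorm xj ^ 2 ≤ d j := by
      rw [le_div_iff₀ (pow_pos henx 2)] at hloj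
      exact hloj
    have hhij' : d j ≤ lamHi * euclNorm xj ^ 2 := by
      rw [div_le_iff₀ (pow_pos henx 2)] at hhij
      exact hhij
    have h3 : 1 / sigmaMax L * (1 / sigmaMax L) ≤ euclNorm xj * euclNorm xj :=
      mul_le_mul hlb hlb (by positivity) (le_of_lt henx)
    have h4 : (1:ℝ) / sigmaMax L ^ 2 ≤ euclNorm xj ^ 2 := by
      rw [sq, sq]
      calc 1 / (sigmaMax L * sigmaMax L) = 1 / sigmaMax L * (1 / sigmaMax L) := by
            rw [div_mul_div_comm, one_mul]
        _ ≤ euclNorm xj * euclNorm xj := h3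
    have h5 : euclNorm xj ^ 2 ≤ (1:ℝ) / sigmaMin L ^ 2 := by
      have := pow_le_pow_left₀ (le_of_lt henx) hub 2
      calc euclNorm xj ^ 2 ≤ (1 / sigmaMin L) ^ 2 := this
        _ = 1 / sigmaMin L ^ 2 := by rw [div_pow, one_pow]
    have hHnn : 0 ≤ lamHi := le_of_lt (lt_of_lt_of_le hlamLo hlamLoHi)
    constructor
    · calc lamLo / sigmaMax L ^ 2 = lamLo * (1 / sigmaMax L ^ 2) := by ring
        _ ≤ lamLo * euclNorm xj ^ 2 := mul_le_mul_of_nonneg_left h4 (le_of_lt hlamLo)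
        _ ≤ d j := hloj'
    · calc d j ≤ lamHi * euclNorm xj ^ 2 := hhij'
        _ ≤ lamHi * (1 / sigmaMin L ^ 2) := mul_le_mul_of_nonneg_left h5 hHnn
        _ = lamHi / sigmaMin L ^ 2 := by ring
  have hdpos : ∀ j : Fin p, 0 < d j := fun j =>
    lt_of_lt_of_le (by positivity) (hdbound j).1
  set a := max τ (lamLo / sigmaMax L ^ 2) with ha
  set b := max τ (lamHi / sigmaMin L ^ 2) with hb
  have hfa : ∀ j, a ≤ max τ |d j| := fun j =>
    max_le_max le_rfl (by rw [abs_of_pos (hdpos j)]; exact (hdbound j).1)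
  have hfb : ∀ j, max τ |d j| ≤ b := fun j =>
    max_le_max le_rfl (by rw [abs_of_pos (hdpos j)]; exact (hdbound j).2)
  have hapos : 0 < a := lt_of_lt_of_le hτ (le_max_left _ _)
  have hbpos : 0 < b := lt_of_lt_of_le hτ (le_max_left _ _)
  have hup : ∀ x : Fin p → ℝ, x ≠ 0 →
      x ⬝ᵥ (Pᵀ * L * Q * (Matrix.diagonal fun j => max τ |d j|) * Qᵀ * Lᵀ * P).mulVec x
        ≤ b * sigmaMax L ^ 2 * euclNorm x ^ 2 := by
    intro x hx
    rw [hA (Matrix.diagonal fun j => max τ |d j|), rayleigh_congr, quad_diag]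
    have h1 : ∑ j, max τ |d j| * (M *ᵥ x) j ^ 2 ≤ b * euclNorm (M *ᵥ x) ^ 2 := by
      rw [en_sq, Finset.mul_sum]
      exact Finset.sum_le_sum fun j _ => mul_le_mul_of_nonneg_right (hfb j) (sq_nonneg _)
    have h3 : euclNorm (M *ᵥ x) ^ 2 ≤ (sigmaMax L * euclNorm x) ^ 2 :=
      pow_le_pow_left₀ (en_nonneg _) (hMhi x) 2
    calc ∑ j, max τ |d j| * (M *ᵥ x) j ^ 2 ≤ b * euclNorm (M *ᵥ x) ^ 2 := h1
      _ ≤ b * (sigmaMax L * euclNorm x) ^ 2 :=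
        mul_le_mul_of_nonneg_left h3 (le_of_lt hbpos)
      _ = b * sigmaMax L ^ 2 * euclNorm x ^ 2 := by ring
  have hdn : ∀ x : Fin p → ℝ, x ≠ 0 →
      a * sigmaMin L ^ 2 * euclNorm x ^ 2
        ≤ x ⬝ᵥ (Pᵀ * L * Q * (Matrix.diagonal fun j => max τ |d j|) * Qᵀ * Lᵀ * P).mulVec x := by
    intro x hx
    rw [hA (Matrix.diagonal fun j => max τ |d j|), rayleigh_congr, quad_diag]
    have h1 : a * euclNorm (M *ᵥ x) ^ 2 ≤ ∑ j, max τ |d j| * (M *ᵥ x) j ^ 2 := by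
      rw [en_sq, Finset.mul_sum]
      exact Finset.sum_le_sum fun j _ => mul_le_mul_of_nonneg_right (hfa j) (sq_nonneg _)
    have h3 : (sigmaMin L * euclNorm x) ^ 2 ≤ euclNorm (M *ᵥ x) ^ 2 :=
      pow_le_pow_left₀ (mul_nonneg (le_of_lt hσmin) (en_nonneg x)) (hMlo x) 2
    calc a * sigmaMin L ^ 2 * euclNorm x ^ 2 = a * (sigmaMin L * euclNorm x) ^ 2 := by ring
      _ ≤ a * euclNorm (M *ᵥ x) ^ 2 := mul_le_mul_of_nonneg_left h3 (le_of_lt hapos)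
      _ ≤ ∑ j, max τ |d j| * (M *ᵥ x) j ^ 2 := h1
  have hmax : lambdaMax (Pᵀ * L * Q * (Matrix.diagonal fun j => max τ |d j|) * Qᵀ * Lᵀ * P)
      ≤ b * sigmaMax L ^ 2 := lambdaMax_le hp _ _ hup
  have hmin : a * sigmaMin L ^ 2
      ≤ lambdaMin (Pᵀ * L * Q * (Matrix.diagonal fun j => max τ |d j|) * Qᵀ * Lᵀ * P) :=
    le_lambdaMin hp _ _ hdn
  have hdposn : 0 < a * sigmaMin L ^ 2 := by positivity
  calc lambdaMax (Pᵀ * L * Q * (Matrix.diagonal fun j => max τ |d j|) * Qᵀ * Lᵀ * P) /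
        lambdaMin (Pᵀ * L * Q * (Matrix.diagonal fun j => max τ |d j|) * Qᵀ * Lᵀ * P)
      ≤ (b * sigmaMax L ^ 2) / (a * sigmaMin L ^ 2) :=
        div_le_div₀ (by positivity) hmax hdposn hmin
    _ = sigmaMax L ^ 2 / sigmaMin L ^ 2 * (b / a) := by
        field_simp
end
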